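/- (The hyperplane {x^0 = 0} is a Cauchy surface of Minkowski space-time.) Let γ : ℝ → ℝ^{1+n} be an inextendible future-directed timelike curve, i.e. a locally Lipschitz curve whose derivative γ'(s) is timelike future-directed and satisfies ‖γ'(s)‖ = 1 (Euclidean norm) for almost every s ∈ ℝ. Then there is exactly one s ∈ ℝ with γ^0(s) = 0; moreover γ^0 is strictly increasing with γ^0(s) → ±∞ as s → ±∞. -/

import Mathlib

open Set MeasureTheory Filter Topology
open scoped RealInnerProductSpace

noncomputable section

/-- Minkowski space-time `ℝ^{1+n} = ℝ × ℝ^n`. -/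
abbrev Mink (n : ℕ) : Type := ℝ × EuclideanSpace ℝ (Fin n)

/-- A vector is timelike future-directed if `v⁰ > |v⃗|`. -/
def timelikeFD {n : ℕ} (v : Mink n) : Prop := ‖v.2‖ < v.1

/-- A vector is causal future-directed if `v ≠ 0` and `v⁰ ≥ |v⃗|`. -/
def causalFD {n : ℕ} (v : Mink n) : Prop := v ≠ 0 ∧ ‖v.2‖ ≤ v.1

/-- A vector is null future-directed if `v ≠ 0` and `v⁰ = |v⃗|`. -/
def nullFD {n : ℕ} (v : Mink n) : Prop := v ≠ 0 ∧ ‖v.2‖ = v.1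

/-- A vector is causal past-directed if `-v` is causal future-directed. -/
def causalPD {n : ℕ} (v : Mink n) : Prop := causalFD (-v)

/-- The Minkowski bilinear form `η(x,y) = -x⁰y⁰ + ⟨x⃗,y⃗⟩`. -/
def minkBF {n : ℕ} (x y : Mink n) : ℝ := -(x.1 * y.1) + ⟪x.2, y.2⟫

/-- The Euclidean norm on `ℝ^{1+n}`. -/
def eNorm {n : ℕ} (v : Mink n) : ℝ := Real.sqrt (v.1 ^ 2 + ‖v.2‖ ^ 2)

/-- A future-directed causal curve defined on `S ⊆ ℝ`: locally Lipschitz, with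
almost-everywhere derivative causal future-directed. -/
def IsCausalCurveOn {n : ℕ} (γ : ℝ → Mink n) (S : Set ℝ) : Prop :=
  (∀ a b : ℝ, Icc a b ⊆ S → ∃ K : NNReal, LipschitzOnWith K γ (Icc a b)) ∧
  (∀ᵐ s ∂(volume.restrict S), ∃ v : Mink n, HasDerivWithinAt γ v S s ∧ causalFD v)

/-- A future-directed timelike curve defined on `S ⊆ ℝ`. -/
def IsTimelikeCurveOn {n : ℕ} (γ : ℝ → Mink n) (S : Set ℝ) : Prop :=
  (∀ a b : ℝ, Icc a b ⊆ S → ∃ K : NNReal, LipschitzOnWith K γ (Icc a b)) ∧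
  (∀ᵐ s ∂(volume.restrict S), ∃ v : Mink n, HasDerivWithinAt γ v S s ∧ timelikeFD v)

/-- A past-directed causal curve defined on `S ⊆ ℝ`. -/
def IsPastCausalCurveOn {n : ℕ} (γ : ℝ → Mink n) (S : Set ℝ) : Prop :=
  (∀ a b : ℝ, Icc a b ⊆ S → ∃ K : NNReal, LipschitzOnWith K γ (Icc a b)) ∧
  (∀ᵐ s ∂(volume.restrict S), ∃ v : Mink n, HasDerivWithinAt γ v S s ∧ causalPD v)

/-- `chron p q`: there is a future-directed timelike curve from `p` to `q`. -/
def chron {n : ℕ} (p q : Mink n) : Prop :=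
  ∃ (a b : ℝ) (γ : ℝ → Mink n), a < b ∧ IsTimelikeCurveOn γ (Icc a b) ∧ γ a = p ∧ γ b = q

/-- `caus p q`: `q = p`, or there is a future-directed causal curve from `p` to `q`. -/
def caus {n : ℕ} (p q : Mink n) : Prop :=
  p = q ∨ ∃ (a b : ℝ) (γ : ℝ → Mink n), a < b ∧ IsCausalCurveOn γ (Icc a b) ∧ γ a = p ∧ γ b = q

/-- `causPast p q`: `q = p`, or there is a past-directed causal curve from `p` to `q`. -/
def causPast {n : ℕ} (p q : Mink n) : Prop :=
  p = q ∨ ∃ (a b : ℝ) (γ : ℝ → Mink n), a < b ∧ IsPastCausalCurveOn γ (Icc a b) ∧ γ a = p ∧ γ b = q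

/-- The timelike future `I⁺(U)`. -/
def Iplus {n : ℕ} (U : Set (Mink n)) : Set (Mink n) := {q | ∃ p ∈ U, chron p q}

/-- The causal future `J⁺(U)`. -/
def Jplus {n : ℕ} (U : Set (Mink n)) : Set (Mink n) := {q | ∃ p ∈ U, caus p q}

/-- The causal past `J⁻(U)`. -/
def Jminus {n : ℕ} (U : Set (Mink n)) : Set (Mink n) := {q | ∃ p ∈ U, causPast p q}

/-- An inextendible future-directed timelike curve: defined on all of `ℝ`, locally
Lipschitz, parameterized by Euclidean arclength, with a.e. timelike future derivative. -/
def IsInextTimelike {n : ℕ} (γ : ℝ → Mink n) : Prop :=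
  LocallyLipschitz γ ∧
  ∀ᵐ s : ℝ, ∃ v : Mink n, HasDerivAt γ v s ∧ timelikeFD v ∧ eNorm v = 1


/-- `{x⁰ = 0}` is a Cauchy surface of Minkowski space-time: every
inextendible future-directed timelike curve meets it exactly once; moreover `γ⁰` is
strictly increasing and tends to `±∞` at `±∞`. -/

lemma lip_subsingleton {f : ℝ → ℝ} {s : Set ℝ} (hs : s.Subsingleton) :
    LipschitzOnWith 1 f s := by
  rw [lipschitzOnWith_iff_dist_le_mul]
  intro x hx y hy
  rw [hs hx hy]
  simp

lemma lipOn_join {f : ℝ → ℝ} {K : NNReal} {a c b : ℝ} (hac : a ≤ c) (hcb : c ≤ b)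
    (h1 : LipschitzOnWith K f (Icc a c)) (h2 : LipschitzOnWith K f (Icc c b)) :
    LipschitzOnWith K f (Icc a b) := by
  rw [lipschitzOnWith_iff_dist_le_mul] at *
  intro x hx y hy
  rcases le_total x c with hxc | hxc <;> rcases le_total y c with hyc | hyc
  · exact h1 _ ⟨hx.1, hxc⟩ _ ⟨hy.1, hyc⟩
  · calc dist (f x) (f y) ≤ dist (f x) (f c) + dist (f c) (f y) := dist_triangle _ _ _
      _ ≤ K * dist x c + K * dist c y :=
          add_le_add (h1 _ ⟨hx.1, hxc⟩ _ ⟨hac, le_refl c⟩) (h2 _ ⟨le_refl c, hcb⟩ _ ⟨hyc, hy.2⟩)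
      _ = K * dist x y := by
          have hx2 : x ≤ c := hxc
          have hy2 : c ≤ y := hyc
          rw [Real.dist_eq, Real.dist_eq, Real.dist_eq,
            abs_of_nonpos (by linarith), abs_of_nonpos (by linarith),
            abs_of_nonpos (by linarith)]; ring
  · calc dist (f x) (f y) ≤ dist (f x) (f c) + dist (f c) (f y) := dist_triangle _ _ _
      _ ≤ K * dist x c + K * dist c y :=
          add_le_add (h2 _ ⟨hxc, hx.2⟩ _ ⟨le_refl c, hcb⟩) (h1 _ ⟨hac, le_refl c⟩ _ ⟨hy.1, hyc⟩)
      _ = K * dist x y := by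
          have hx2 : c ≤ x := hxc
          have hy2 : y ≤ c := hyc
          rw [Real.dist_eq, Real.dist_eq, Real.dist_eq,
            abs_of_nonneg (by linarith), abs_of_nonneg (by linarith),
            abs_of_nonneg (by linarith)]; ring
  · exact h2 _ ⟨hxc, hx.2⟩ _ ⟨hyc, hy.2⟩

lemma locallyLipschitz_lipschitzOnWith_Icc {f : ℝ → ℝ} (hf : LocallyLipschitz f)
    (a b : ℝ) : ∃ K : NNReal, LipschitzOnWith K f (Icc a b) := by
  rcases le_or_gt b a with hba | hab
  · exact ⟨1, lip_subsingleton (fun x hx y hy => le_antisymm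
      (le_trans hx.2 (le_trans hba hy.1)) (le_trans hy.2 (le_trans hba hx.1)))⟩
  have hab' : a ≤ b := hab.le
  set S : Set ℝ := {x | x ∈ Icc a b ∧ ∃ K : NNReal, LipschitzOnWith K f (Icc a x)} with hS
  have hSa : a ∈ S :=
    ⟨⟨le_refl a, hab'⟩, 1, lip_subsingleton (fun x hx y hy => le_antisymm
      (le_trans hx.2 hy.1) (le_trans hy.2 hx.1))⟩
  have hSbdd : BddAbove S := ⟨b, fun x hx => hx.1.2⟩
  set m := sSup S with hm
  have ham : a ≤ m := le_csSup hSbdd hSa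
  have hmb : m ≤ b := csSup_le ⟨a, hSa⟩ (fun x hx => hx.1.2)
  -- local Lipschitz at m
  obtain ⟨K₀, t, ht, hK₀⟩ := hf m
  obtain ⟨ε, hε, hball⟩ := Metric.mem_nhds_iff.1 ht
  have hKloc : LipschitzOnWith K₀ f (Icc (m - ε/2) (m + ε/2)) := by
    refine hK₀.mono (fun y hy => hball ?_)
    obtain ⟨hy1, hy2⟩ := hy
    rw [Metric.mem_ball, Real.dist_eq, abs_lt]
    constructor <;> linarith
  -- pick x ∈ S close to m
  obtain ⟨x, hxS, hxm⟩ : ∃ x ∈ S, m - ε/2 < x :=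
    exists_lt_of_lt_csSup ⟨a, hSa⟩ (by linarith)
  obtain ⟨hxIcc, K₁, hK₁⟩ := hxS
  obtain ⟨hax, hxb⟩ := hxIcc
  have hxm' : x ≤ m := le_csSup hSbdd (by exact ⟨⟨hax, hxb⟩, K₁, hK₁⟩)
  set m' := min b (m + ε/2) with hm'
  have hmm' : m ≤ m' := le_min hmb (by linarith)
  have hweak : ∀ (K K' : NNReal) (s : Set ℝ), K ≤ K' → LipschitzOnWith K f s →
      LipschitzOnWith K' f s := by
    intro K K' s hKK' h
    rw [lipschitzOnWith_iff_dist_le_mul] at *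
    intro u hu v hv
    exact le_trans (h _ hu _ hv) (by
      have : (K:ℝ) ≤ K' := hKK'
      have := dist_nonneg (x := u) (y := v)
      nlinarith)
  have hm'S : m' ∈ S := by
    refine ⟨⟨le_trans hax (hxm'.trans hmm'), min_le_left _ _⟩, max K₁ K₀, ?_⟩
    refine lipOn_join (c := x) (le_trans hax (le_refl x)) (hxm'.trans hmm')
      (hweak _ _ _ (le_max_left _ _) hK₁)
      (hweak _ _ _ (le_max_right _ _) (hKloc.mono ?_))
    intro y hy
    exact ⟨le_trans (by linarith [hxm]) hy.1, le_trans hy.2 (min_le_right _ _)⟩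
  have hm'm : m' ≤ m := le_csSup hSbdd hm'S
  have hmb' : m = b := by
    by_contra hne
    have hmltb : m < b := lt_of_le_of_ne hmb hne
    have : m < m' := lt_min hmltb (by linarith)
    linarith
  have hm'b : m' = b := le_antisymm (min_le_left _ _) (hmb' ▸ hmm')
  obtain ⟨_, K, hK⟩ := hm'S
  exact ⟨K, hm'b ▸ hK⟩

lemma key_deriv_lower {f : ℝ → ℝ} {K : NNReal} (hf : LipschitzWith K f) {c a b : ℝ}
    (hab : a ≤ b)
    (h : ∀ᵐ x ∂(volume.restrict (Ioc a b)), ∃ v : ℝ, HasDerivAt f v x ∧ c ≤ v) :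
    c * (b - a) ≤ f b - f a := by
  have hcont : Continuous f := hf.continuous
  set μ := volume.restrict (Ioc a b) with hμ
  have hfin : IsFiniteMeasure μ := by
    constructor
    rw [hμ, Measure.restrict_apply_univ, Real.volume_Ioc]
    exact ENNReal.ofReal_lt_top
  set F : ℕ → ℝ → ℝ := fun k x => (f (x + 1/(k+1)) - f x) * (k+1) with hFdef
  set g : ℝ → ℝ := deriv f with hg
  -- sequence of steps tends to 0 within positives
  have hstep : ∀ k : ℕ, (0:ℝ) < 1/(k+1) := fun k => by positivity
  have hseq : ∀ x : ℝ, Tendsto (fun k : ℕ => x + 1/(k+1:ℝ)) atTop (𝓝[≠] x) := by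
    intro x
    rw [tendsto_nhdsWithin_iff]
    constructor
    · have h0 : Tendsto (fun k : ℕ => 1/(k+1:ℝ)) atTop (𝓝 0) :=
        tendsto_one_div_add_atTop_nhds_zero_nat
      simpa using (tendsto_const_nhds.add h0)
    · filter_upwards with k
      have := hstep k
      simp only [mem_compl_iff, mem_singleton_iff]
      intro hx
      nlinarith [hstep k]
  have hslopeF : ∀ (x : ℝ) (k : ℕ), F k x = slope f x (x + 1/(k+1)) := by
    intro x k
    have hk : ((k:ℝ)+1) ≠ 0 := by positivity
    rw [slope_def_field, show x + 1/((k:ℝ)+1) - x = 1/((k:ℝ)+1) by ring, div_div_eq_mul_div, div_one]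
  have hae : ∀ᵐ x ∂μ, c ≤ g x ∧ ‖g x‖ ≤ (K:ℝ) ∧
      Tendsto (fun k => F k x) atTop (𝓝 (g x)) := by
    filter_upwards [h] with x hx
    obtain ⟨v, hv, hcv⟩ := hx
    have hgx : g x = v := hv.deriv
    have hnorm : ‖v‖ ≤ (K:ℝ) := by
      have h1 : HasFDerivAt f (ContinuousLinearMap.smulRight (1 : ℝ →L[ℝ] ℝ) v) x :=
        hv.hasFDerivAt
      have h2 := h1.le_of_lipschitz hf
      calc ‖v‖ = ‖ContinuousLinearMap.smulRight (1 : ℝ →L[ℝ] ℝ) v‖ := by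
                simp [ContinuousLinearMap.norm_smulRight_apply]
        _ ≤ (K:ℝ) := h2
    refine ⟨hgx ▸ hcv, hgx ▸ hnorm, ?_⟩
    rw [hgx]
    have hs := hasDerivAt_iff_tendsto_slope.1 hv
    have := hs.comp (hseq x)
    apply this.congr
    intro k
    exact (hslopeF x k).symm
  have hFmeas : ∀ k, AEStronglyMeasurable (F k) μ := by
    intro k
    exact (((hcont.comp (continuous_id.add continuous_const)).sub hcont).mul
      continuous_const).aestronglyMeasurable
  have hbound : ∀ k, ∀ᵐ x ∂μ, ‖F k x‖ ≤ (K:ℝ) := by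
    intro k
    filter_upwards with x
    have h1 : dist (f (x + 1/(k+1))) (f x) ≤ (K:ℝ) * (1/(k+1)) := by
      have := hf.dist_le_mul (x + 1/(k+1)) x
      calc dist (f (x + 1/(k+1))) (f x) ≤ (K:ℝ) * dist (x + 1/(k+1)) x := this
        _ = (K:ℝ) * (1/(k+1)) := by
            rw [Real.dist_eq]
            congr 1
            rw [abs_of_pos (by simpa using hstep k)]
            ring
    have hk : ((k:ℝ)+1) > 0 := by positivity
    rw [Real.dist_eq] at h1
    have heq : ‖F k x‖ = |f (x + 1/(k+1)) - f x| * ((k:ℝ)+1) := by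
      rw [hFdef]
      simp only [Real.norm_eq_abs, abs_mul, abs_of_pos hk]
    rw [heq]
    calc |f (x + 1/(k+1)) - f x| * ((k:ℝ)+1) ≤ ((K:ℝ) * (1/(k+1))) * ((k:ℝ)+1) := by
          apply mul_le_mul_of_nonneg_right h1 hk.le
      _ = (K:ℝ) := by field_simp
  have hlim : Tendsto (fun k => ∫ x, F k x ∂μ) atTop (𝓝 (∫ x, g x ∂μ)) :=
    tendsto_integral_of_dominated_convergence (fun _ => (K:ℝ)) hFmeas (integrable_const _)
      hbound (hae.mono fun x hx => hx.2.2)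
  have hint : ∀ u v : ℝ, IntervalIntegrable f volume u v := fun u v =>
    hcont.intervalIntegrable u v
  have hGb : HasDerivAt (fun u => ∫ t in b..u, f t) (f b) b :=
    intervalIntegral.integral_hasDerivAt_right (hint b b)
      (hcont.stronglyMeasurableAtFilter _ _) hcont.continuousAt
  have hGa : HasDerivAt (fun u => ∫ t in a..u, f t) (f a) a :=
    intervalIntegral.integral_hasDerivAt_right (hint a a)
      (hcont.stronglyMeasurableAtFilter _ _) hcont.continuousAt
  have hscale : ∀ (G : ℝ → ℝ) (u L : ℝ), HasDerivAt G L u → G u = 0 →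
      Tendsto (fun k : ℕ => G (u + 1/(k+1)) * (k+1)) atTop (𝓝 L) := by
    intro G u L hG hGu
    have hs := hasDerivAt_iff_tendsto_slope.1 hG
    have h2 := hs.comp (hseq u)
    apply h2.congr
    intro k
    show slope G u (u + 1/(k+1)) = _
    rw [slope_def_field, hGu, sub_zero, show u + 1/((k:ℝ)+1) - u = 1/((k:ℝ)+1) by ring,
      div_div_eq_mul_div, div_one]
  have htb := hscale _ b (f b) hGb intervalIntegral.integral_same
  have hta := hscale _ a (f a) hGa intervalIntegral.integral_same
  have hFint : ∀ k : ℕ, ∫ x, F k x ∂μ =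
      (∫ t in b..(b + 1/(k+1)), f t) * ((k:ℝ)+1) - (∫ t in a..(a + 1/(k+1)), f t) * ((k:ℝ)+1) := by
    intro k
    set hh := 1/((k:ℝ)+1) with hhdef
    have e1 : ∫ x, F k x ∂μ = ∫ x in a..b, F k x := (intervalIntegral.integral_of_le hab).symm
    have e2 : ∫ x in a..b, F k x = (∫ x in a..b, (f (x + hh) - f x)) * ((k:ℝ)+1) := by
      rw [← intervalIntegral.integral_mul_const]
    have hint1 : IntervalIntegrable (fun x => f (x + hh)) volume a b :=
      (hcont.comp (continuous_id.add continuous_const)).intervalIntegrable _ _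
    have e3 : ∫ x in a..b, (f (x + hh) - f x) = (∫ x in a..b, f (x + hh)) - ∫ x in a..b, f x :=
      intervalIntegral.integral_sub hint1 (hint a b)
    have e4 : ∫ x in a..b, f (x + hh) = ∫ x in (a+hh)..(b+hh), f x :=
      intervalIntegral.integral_comp_add_right f hh
    have e5 : (∫ x in a..(a+hh), f x) + (∫ x in (a+hh)..(b+hh), f x) = ∫ x in a..(b+hh), f x :=
      intervalIntegral.integral_add_adjacent_intervals (hint _ _) (hint _ _)
    have e6 : (∫ x in a..b, f x) + (∫ x in b..(b+hh), f x) = ∫ x in a..(b+hh), f x :=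
      intervalIntegral.integral_add_adjacent_intervals (hint _ _) (hint _ _)
    rw [e1, e2, e3, e4]
    have e7 : (∫ x in (a+hh)..(b+hh), f x) - ∫ x in a..b, f x
        = (∫ x in b..(b+hh), f x) - ∫ x in a..(a+hh), f x := by linarith
    rw [e7]
    ring
  have hlim2 : Tendsto (fun k => ∫ x, F k x ∂μ) atTop (𝓝 (f b - f a)) := by
    have h2 := htb.sub hta
    apply h2.congr
    intro k
    exact (hFint k).symm
  have hkey : ∫ x, g x ∂μ = f b - f a := tendsto_nhds_unique hlim hlim2
  have hgint : Integrable g μ := by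
    refine Integrable.mono' (integrable_const (K:ℝ))
      ((measurable_deriv f).aestronglyMeasurable) ?_
    exact hae.mono fun x hx => hx.2.1
  have hlow : c * (b - a) ≤ ∫ x, g x ∂μ := by
    have h1 : ∫ _x, c ∂μ ≤ ∫ x, g x ∂μ :=
      integral_mono_ae (integrable_const c) hgint (hae.mono fun x hx => hx.1)
    have h2 : ∫ _x, c ∂μ = c * (b - a) := by
      rw [integral_const, hμ, measureReal_restrict_apply_univ, measureReal_def, Real.volume_Ioc,
        ENNReal.toReal_ofReal (by linarith), smul_eq_mul, mul_comm]
    linarith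
  rw [hkey] at hlow
  exact hlow

theorem zero_time_hyperplane_is_cauchy (n : ℕ) (γ : ℝ → Mink n)
    (hγ : IsInextTimelike γ) :
    (∃! s : ℝ, (γ s).1 = 0) ∧
    StrictMono (fun s => (γ s).1) ∧
    Tendsto (fun s => (γ s).1) atTop atTop ∧
    Tendsto (fun s => (γ s).1) atBot atBot := by
  set f : ℝ → ℝ := fun s => (γ s).1 with hfdef
  have hcont : Continuous f := continuous_fst.comp hγ.1.continuous
  have hll : LocallyLipschitz f := by
    have h1 : LocallyLipschitz (Prod.fst : Mink n → ℝ) :=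
      LipschitzWith.locallyLipschitz LipschitzWith.prod_fst
    exact h1.comp hγ.1
  -- the key increment inequality
  have hmono : ∀ a b : ℝ, a ≤ b → (1/2) * (b - a) ≤ f b - f a := by
    intro a b hab
    obtain ⟨K₁, hK₁⟩ := locallyLipschitz_lipschitzOnWith_Icc hll (a-1) (b+1)
    obtain ⟨g, hg_lip, hfg⟩ := hK₁.extend_real
    have hIccNhds : ∀ x ∈ Ioc a b, Icc (a-1) (b+1) ∈ 𝓝 x := by
      intro x hx
      exact Icc_mem_nhds (by linarith [hx.1]) (by linarith [hx.2])
    have h' : ∀ᵐ x ∂(volume.restrict (Ioc a b)), ∃ v : ℝ, HasDerivAt g v x ∧ 1/2 ≤ v := by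
      filter_upwards [ae_restrict_of_ae hγ.2, ae_restrict_mem measurableSet_Ioc]
        with x hx hxmem
      obtain ⟨v, hv, htl, hnorm⟩ := hx
      have hvf : HasDerivAt f v.1 x := by
        have h2 := hv.hasFDerivAt.fst.hasDerivAt
        simpa using h2
      have heq : g =ᶠ[𝓝 x] f := by
        filter_upwards [hIccNhds x hxmem] with y hy
        exact (hfg hy).symm
      have hvg : HasDerivAt g v.1 x := by
        refine hvf.congr_of_eventuallyEq heq
      refine ⟨v.1, hvg, ?_⟩
      have h1 : v.1 ^ 2 + ‖v.2‖ ^ 2 = 1 := by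
        have h0 : (0:ℝ) ≤ v.1 ^ 2 + ‖v.2‖ ^ 2 := by positivity
        have hs := Real.sq_sqrt h0
        rw [show Real.sqrt (v.1 ^ 2 + ‖v.2‖ ^ 2) = 1 from hnorm] at hs
        linarith [hs]
      have h2 : ‖v.2‖ < v.1 := htl
      nlinarith [norm_nonneg v.2]
    have hkey := key_deriv_lower hg_lip hab h'
    have hga : g a = f a := (hfg ⟨by linarith, by linarith⟩).symm
    have hgb : g b = f b := (hfg ⟨by linarith, by linarith⟩).symm
    rw [hga, hgb] at hkey
    exact hkey
  have hsm : StrictMono f := by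
    intro x y hxy
    have h := hmono x y hxy.le
    nlinarith
  have hub : ∀ s : ℝ, 0 ≤ s → f 0 + (1/2) * s ≤ f s := by
    intro s hs
    have := hmono 0 s hs
    linarith
  have hlb : ∀ s : ℝ, s ≤ 0 → f s ≤ f 0 + (1/2) * s := by
    intro s hs
    have := hmono s 0 hs
    linarith
  have htop : Tendsto f atTop atTop := by
    refine tendsto_atTop_mono' atTop (f₁ := fun s => f 0 + (1/2) * s) ?_ ?_
    · filter_upwards [eventually_ge_atTop (0:ℝ)] with s hs
      exact hub s hs
    · exact tendsto_atTop_add_const_left _ _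
        (Tendsto.const_mul_atTop (by norm_num) tendsto_id)
  have hbot : Tendsto f atBot atBot := by
    refine tendsto_atBot_mono' atBot (f₁ := fun s => f 0 + (1/2) * s) ?_ ?_
    · filter_upwards [eventually_le_atBot (0:ℝ)] with s hs
      exact hlb s hs
    · exact tendsto_atBot_add_const_left _ _
        ((tendsto_const_mul_atBot_of_pos (by norm_num)).mpr tendsto_id)
  refine ⟨?_, hsm, htop, hbot⟩
  obtain ⟨p, hp⟩ := (hbot.eventually (eventually_lt_atBot (0:ℝ))).exists
  obtain ⟨q, hq⟩ := (htop.eventually (eventually_gt_atTop (0:ℝ))).exists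
  have hpq : p ≤ q := by
    by_contra hc
    push_neg at hc
    have := hsm hc
    linarith
  have hIVT := intermediate_value_Icc hpq hcont.continuousOn
  have h0mem : (0:ℝ) ∈ Icc (f p) (f q) := ⟨hp.le, hq.le⟩
  obtain ⟨s, _, hs⟩ := hIVT h0mem
  exact ⟨s, hs, fun y hy => hsm.injective (hy.trans hs.symm)⟩
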